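/- Let X be a complete separable metric space with its Borel σ-algebra, μ a Borel probability measure on X, f : X → X a Borel-measurable map, 𝒜₀ a countable algebra of Borel sets generating the Borel σ-algebra, and ℙ_f the dynamical partition of X with respect to f and 𝒜₀. Suppose μ is f-invariant, i.e. μ(f⁻¹(A)) = μ(A) for every Borel set A. If {μ_P : P ∈ ℙ_f} is a disintegration of μ with respect to ℙ_f, then for μ̂-almost every P ∈ ℙ_f the conditional measure μ_P is f-invariant. -/

import Mathlib

open MeasureTheory Filter Set Topology

namespace ErgodicDecomposition

variable {X : Type*}

/-- `ℙ` is a partition of `X`: every point lies in exactly one element of `ℙ`. -/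
def IsPartition (ℙ : Set (Set X)) : Prop := ∀ x : X, ∃! P, P ∈ ℙ ∧ x ∈ P

open Classical in
/-- The element of `ℙ` containing `x` (with junk value `∅` if there is none);
this is the canonical projection `τ̂ : X → ℙ`. -/
noncomputable def partOf (ℙ : Set (Set X)) (x : X) : Set X :=
  if h : ∃ P, P ∈ ℙ ∧ x ∈ P then h.choose else ∅

/-- `ν` is a disintegration of `μ` with respect to the partition `ℙ`.  All statements about
the quotient space `ℙ` (its σ-algebra, the quotient measure `μ̂`, measurability of
`P ↦ μ_P(E)` and integration against `μ̂`) are expressed, equivalently, after pulling back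
along the canonical projection `x ↦ partOf ℙ x`, since the σ-algebra of `ℙ` is by definition
the pushforward σ-algebra and `μ̂` is the pushforward measure. -/
def IsDisintegration [MeasurableSpace X] (μ : Measure X) (ℙ : Set (Set X))
    (ν : Set X → Measure X) : Prop :=
  (∀ P ∈ ℙ, IsProbabilityMeasure (ν P)) ∧
  (∀ᵐ x ∂μ, ν (partOf ℙ x) (partOf ℙ x) = 1) ∧
  (∀ E : Set X, MeasurableSet E →
    Measurable (fun x => ν (partOf ℙ x) E) ∧ μ E = ∫⁻ x, ν (partOf ℙ x) E ∂μ)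

/-- `ℙ` is a measurable partition for `μ`: a partition of `X` into measurable sets such that
there are a full measure set `X₀` and a refining sequence of countable partitions `Ps n` into
measurable sets with `P(x) = ⋂ n, P_n(x)` for every `x ∈ X₀`. -/
def IsMeasurablePartition [MeasurableSpace X] (μ : Measure X) (ℙ : Set (Set X)) : Prop :=
  IsPartition ℙ ∧ (∀ P ∈ ℙ, MeasurableSet P) ∧
  ∃ X₀ : Set X, MeasurableSet X₀ ∧ μ X₀ = 1 ∧
  ∃ Ps : ℕ → Set (Set X),
    (∀ n, (Ps n).Countable) ∧
    (∀ n, IsPartition (Ps n)) ∧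
    (∀ n, ∀ P ∈ Ps n, MeasurableSet P) ∧
    (∀ n, ∀ B ∈ Ps (n + 1), ∃ A ∈ Ps n, B ⊆ A) ∧
    (∀ x ∈ X₀, partOf ℙ x = ⋂ n, partOf (Ps n) x)

open Classical in
/-- `τ(x, A)`: the lim-inf of the asymptotic frequency of visits of the orbit of `x` to `A`. -/
noncomputable def visitFreq (f : X → X) (A : Set X) (x : X) : ℝ :=
  atTop.liminf fun n : ℕ =>
    (((Finset.range n).filter fun i => f^[i] x ∈ A).card : ℝ) / n

/-- The equivalence class of `x` for the relation `x ∼ y ↔ τ(x,A) = τ(y,A)` for all `A ∈ 𝒜₀`. -/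
def dynClass (f : X → X) (𝒜₀ : Set (Set X)) (x : X) : Set X :=
  {y | ∀ A ∈ 𝒜₀, visitFreq f A y = visitFreq f A x}

/-- The dynamical partition of `X` with respect to `f` and the countable algebra `𝒜₀`. -/
def dynPartition (f : X → X) (𝒜₀ : Set (Set X)) : Set (Set X) :=
  {P | ∃ x : X, P = dynClass f 𝒜₀ x}

/-! ### Auxiliary lemmas -/

/-- Elementary bound used in `visitFreq_f_apply`. -/
lemma aux_bound {C E n : ℝ} (hn : 1 ≤ n) (hC0 : 0 ≤ C) (hC1 : C ≤ n + 1)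
    (hE0 : 0 ≤ E) (hE1 : E ≤ 1) : |(C - E) / n - C / (n + 1)| ≤ 2 / n := by
  have hn0 : (0:ℝ) < n := by linarith
  have hn1 : (0:ℝ) < n + 1 := by linarith
  have heq : (C - E) / n - C / (n + 1) = C / (n * (n + 1)) - E / n := by
    field_simp
    ring
  rw [heq]
  have habs : |C / (n * (n + 1)) - E / n| ≤ C / (n * (n + 1)) + E / n := by
    refine (abs_sub _ _).trans ?_
    rw [abs_of_nonneg (by positivity), abs_of_nonneg (by positivity)]
  have ha : C / (n * (n + 1)) ≤ 1 / n := by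
    rw [div_le_div_iff₀ (by positivity) hn0]
    nlinarith
  have hb : E / n ≤ 1 / n := by gcongr
  have hsum : (1:ℝ) / n + 1 / n = 2 / n := by ring
  linarith

/-- Two real sequences whose difference tends to `0` have the same liminf
(provided one of them is bounded). -/
lemma liminf_eq_liminf_of_tendsto_sub {u v : ℕ → ℝ}
    (h : Tendsto (fun n => v n - u n) atTop (𝓝 0))
    (hu0 : ∀ n, 0 ≤ u n) (hu1 : ∀ n, u n ≤ 1) :
    atTop.liminf v = atTop.liminf u := by
  set w : ℕ → ℝ := fun n => v n - u n with hw
  have hvw : v = u + w := by funext n; simp [hw]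
  have hwu : v = w + u := by funext n; simp [hw]
  have hwge : IsBoundedUnder (· ≥ ·) atTop w := h.isBoundedUnder_ge
  have hwle : IsBoundedUnder (· ≤ ·) atTop w := h.isBoundedUnder_le
  have huge : IsBoundedUnder (· ≥ ·) atTop u := isBoundedUnder_of ⟨0, hu0⟩
  have hule : IsBoundedUnder (· ≤ ·) atTop u := isBoundedUnder_of ⟨1, hu1⟩
  have hle : atTop.liminf v ≤ atTop.liminf u := by
    calc atTop.liminf v = atTop.liminf (w + u) := by rw [hwu]
    _ ≤ atTop.limsup w + atTop.liminf u :=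
      liminf_add_le hwge hwle huge hule.isCoboundedUnder_ge
    _ = atTop.liminf u := by rw [h.limsup_eq, zero_add]
  have hge : atTop.liminf u ≤ atTop.liminf v := by
    calc atTop.liminf u = atTop.liminf u + atTop.liminf w := by rw [h.liminf_eq, add_zero]
    _ ≤ atTop.liminf (u + w) :=
      le_liminf_add huge hule hwge hwle.isCoboundedUnder_ge
    _ = atTop.liminf v := by rw [← hvw]
  exact le_antisymm hle hge

lemma filter_range_succ_card {g : ℕ → Prop} [DecidablePred g] (m : ℕ) :
    ((Finset.range (m+1)).filter g).card
      = ((Finset.range m).filter g).card + if g m then 1 else 0 := by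
  rw [Finset.range_add_one, Finset.filter_insert]
  by_cases hgm : g m
  · rw [if_pos hgm, if_pos hgm, Finset.card_insert_of_notMem
      (fun h => absurd (Finset.mem_range.1 (Finset.mem_filter.1 h).1) (lt_irrefl m))]
  · rw [if_neg hgm, if_neg hgm, add_zero]

/-- The visit frequency is invariant under one application of `f`. -/
lemma visitFreq_f_apply (f : X → X) (A : Set X) (x : X) :
    visitFreq f A (f x) = visitFreq f A x := by
  classical
  set c : ℕ → ℕ := fun n => ((Finset.range n).filter fun i => f^[i] x ∈ A).card with hc
  set d : ℕ → ℕ := fun n => ((Finset.range n).filter fun i => f^[i] (f x) ∈ A).card with hd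
  set e : ℕ := if x ∈ A then 1 else 0 with he
  have key : ∀ n, c (n + 1) = e + d n := by
    intro n
    induction n with
    | zero =>
      show ((Finset.range 1).filter fun i => f^[i] x ∈ A).card = e + _
      simp only [Finset.range_one, Finset.filter_singleton, Finset.range_zero,
        Finset.filter_empty, Finset.card_empty, Function.iterate_zero_apply, add_zero, he]
      split <;> rename_i hxA <;> simp [hd, hxA]
    | succ n ih =>
      have h1 : c (n + 1 + 1) = c (n + 1) + if f^[n+1] x ∈ A then 1 else 0 :=
        filter_range_succ_card (n + 1)
      have h2 : d (n + 1) = d n + if f^[n] (f x) ∈ A then 1 else 0 :=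
        filter_range_succ_card n
      have h3 : f^[n] (f x) = f^[n+1] x := (Function.iterate_succ_apply f n x).symm
      rw [h1, h2, ih, h3]; ring
  have hcle : ∀ n, c n ≤ n := fun n =>
    le_trans (Finset.card_filter_le _ _) (by simp)
  set u : ℕ → ℝ := fun n => (c n : ℝ) / n with hu
  set v : ℕ → ℝ := fun n => (d n : ℝ) / n with hv
  have hu0 : ∀ n, 0 ≤ u n := fun n => by positivity
  have hu1 : ∀ n, u n ≤ 1 := by
    intro n
    rcases Nat.eq_zero_or_pos n with h | h
    · simp [hu, h]
    · show (c n : ℝ) / n ≤ 1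
      rw [div_le_one (by exact_mod_cast h)]
      exact_mod_cast hcle n
  have hshift : atTop.liminf (fun n => u (n + 1)) = atTop.liminf u := liminf_nat_add u 1
  have hbound : ∀ n : ℕ, 1 ≤ n → |v n - u (n + 1)| ≤ 2 / n := by
    intro n hn
    have hn0 : (0:ℝ) < n := by exact_mod_cast hn
    have hC0 : (0:ℝ) ≤ (c (n+1) : ℝ) := by positivity
    have hC1 : (c (n+1) : ℝ) ≤ (n:ℝ) + 1 := by exact_mod_cast hcle (n+1)
    have he0 : (0:ℝ) ≤ (e : ℝ) := by positivity
    have he1 : (e : ℝ) ≤ 1 := by rw [he]; split <;> norm_num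
    have hdn : (d n : ℝ) = (c (n+1) : ℝ) - e := by
      have h := key n
      have h' : (c (n+1) : ℝ) = (e : ℝ) + (d n : ℝ) := by exact_mod_cast h
      linarith
    show |(d n : ℝ) / n - (c (n+1) : ℝ) / ((n+1 : ℕ) : ℝ)| ≤ 2 / n
    have hcast : ((n+1 : ℕ) : ℝ) = (n:ℝ) + 1 := by push_cast; ring
    rw [hdn, hcast]
    exact aux_bound (by exact_mod_cast hn) hC0 hC1 he0 he1
  have hmain : atTop.liminf v = atTop.liminf (fun n => u (n + 1)) := by
    apply liminf_eq_liminf_of_tendsto_sub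
    · have h2n : Tendsto (fun n : ℕ => 2 / (n:ℝ)) atTop (𝓝 0) :=
        tendsto_const_div_atTop_nhds_zero_nat 2
      refine squeeze_zero_norm' ?_ h2n
      filter_upwards [eventually_ge_atTop 1] with n hn
      simpa using hbound n hn
    · exact fun n => hu0 (n + 1)
    · exact fun n => hu1 (n + 1)
  show atTop.liminf v = atTop.liminf u
  rw [hmain, hshift]

lemma mem_dynClass_self (f : X → X) (𝒜₀ : Set (Set X)) (x : X) :
    x ∈ dynClass f 𝒜₀ x := fun _ _ => rfl

lemma dynClass_eq_of_mem {f : X → X} {𝒜₀ : Set (Set X)} {x y : X}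
    (h : y ∈ dynClass f 𝒜₀ x) : dynClass f 𝒜₀ y = dynClass f 𝒜₀ x := by
  ext z
  constructor
  · exact fun hz A hA => (hz A hA).trans (h A hA)
  · exact fun hz A hA => (hz A hA).trans (h A hA).symm

lemma partOf_dyn_eq (f : X → X) (𝒜₀ : Set (Set X)) (x : X) :
    partOf (dynPartition f 𝒜₀) x = dynClass f 𝒜₀ x := by
  have hex : ∃ P, P ∈ dynPartition f 𝒜₀ ∧ x ∈ P :=
    ⟨dynClass f 𝒜₀ x, ⟨x, rfl⟩, mem_dynClass_self f 𝒜₀ x⟩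
  rw [partOf, dif_pos hex]
  obtain ⟨⟨y, hy⟩, hx⟩ := hex.choose_spec
  rw [hy] at hx ⊢
  exact (dynClass_eq_of_mem hx).symm

lemma partOf_dyn_f_apply (f : X → X) (𝒜₀ : Set (Set X)) (x : X) :
    partOf (dynPartition f 𝒜₀) (f x) = partOf (dynPartition f 𝒜₀) x := by
  rw [partOf_dyn_eq, partOf_dyn_eq]
  exact dynClass_eq_of_mem (fun A _ => visitFreq_f_apply f A x)

lemma partOf_dyn_of_mem {f : X → X} {𝒜₀ : Set (Set X)} {x y : X}
    (h : y ∈ partOf (dynPartition f 𝒜₀) x) :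
    partOf (dynPartition f 𝒜₀) y = partOf (dynPartition f 𝒜₀) x := by
  rw [partOf_dyn_eq] at h ⊢
  rw [partOf_dyn_eq]
  exact dynClass_eq_of_mem h

lemma partOf_dyn_mem (f : X → X) (𝒜₀ : Set (Set X)) (x : X) :
    partOf (dynPartition f 𝒜₀) x ∈ dynPartition f 𝒜₀ := by
  rw [partOf_dyn_eq]; exact ⟨x, rfl⟩

/-- if `μ` is `f`-invariant, then for a disintegration of `μ` with respect to the
dynamical partition almost every conditional measure is `f`-invariant. -/
theorem ae_conditional_invariant {X : Type*} [MetricSpace X] [CompleteSpace X]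
    [TopologicalSpace.SeparableSpace X] [MeasurableSpace X] [BorelSpace X]
    (μ : Measure X) [IsProbabilityMeasure μ]
    (f : X → X) (hf : Measurable f)
    (𝒜₀ : Set (Set X)) (hcount : 𝒜₀.Countable)
    (halg : MeasureTheory.IsSetAlgebra 𝒜₀)
    (hgen : MeasurableSpace.generateFrom 𝒜₀ = ‹MeasurableSpace X›)
    (hinv : ∀ A : Set X, MeasurableSet A → μ (f ⁻¹' A) = μ A)
    (ν : Set X → Measure X)
    (hν : IsDisintegration μ (dynPartition f 𝒜₀) ν) :
    ∀ᵐ x ∂μ, ∀ A : Set X, MeasurableSet A →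
      ν (partOf (dynPartition f 𝒜₀) x) (f ⁻¹' A) = ν (partOf (dynPartition f 𝒜₀) x) A := by
  set ℙ : Set (Set X) := dynPartition f 𝒜₀ with hℙ
  obtain ⟨hν1, hν2, hν3⟩ := hν
  have hprob : ∀ x : X, IsProbabilityMeasure (ν (partOf ℙ x)) :=
    fun x => hν1 _ (partOf_dyn_mem f 𝒜₀ x)
  -- Key: for saturated measurable S and measurable E,
  -- μ (E ∩ S) = ∫⁻ (indicator of S applied to x ↦ ν_{P(x)} E).
  have hkey : ∀ S : Set X, MeasurableSet S →
      (∀ x y : X, y ∈ partOf ℙ x → (y ∈ S ↔ x ∈ S)) →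
      ∀ E : Set X, MeasurableSet E →
      μ (E ∩ S) = ∫⁻ x, S.indicator (fun x => ν (partOf ℙ x) E) x ∂μ := by
    intro S hS hsat E hE
    rw [(hν3 (E ∩ S) (hE.inter hS)).2]
    refine lintegral_congr_ae ?_
    filter_upwards [hν2] with x hx
    haveI := hprob x
    by_cases hxS : x ∈ S
    · have hsub : partOf ℙ x ⊆ S := fun y hy => (hsat x y hy).2 hxS
      have h1 : ν (partOf ℙ x) S = 1 :=
        le_antisymm prob_le_one (hx.symm.trans_le (measure_mono hsub))
      have hScompl : ν (partOf ℙ x) Sᶜ = 0 := by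
        rw [measure_compl hS (measure_ne_top _ S), measure_univ, h1, tsub_self]
      have hdiff : ν (partOf ℙ x) (E \ S) = 0 :=
        measure_mono_null (diff_subset_compl E S) hScompl
      have hEq := measure_inter_add_diff (μ := ν (partOf ℙ x)) E hS
      rw [hdiff, add_zero] at hEq
      rw [Set.indicator_of_mem hxS]
      exact hEq
    · have hsub : partOf ℙ x ⊆ Sᶜ := fun y hy hyS => hxS ((hsat x y hy).1 hyS)
      have h1 : ν (partOf ℙ x) Sᶜ = 1 :=
        le_antisymm prob_le_one (hx.symm.trans_le (measure_mono hsub))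
      have hS0 : ν (partOf ℙ x) S = 0 := by
        have h2 := measure_compl (μ := ν (partOf ℙ x)) hS.compl (measure_ne_top _ Sᶜ)
        rw [compl_compl, measure_univ, h1, tsub_self] at h2
        exact h2
      rw [Set.indicator_of_notMem hxS]
      exact measure_mono_null inter_subset_right hS0
  -- one-sided nullity
  have hnull : ∀ E E' : Set X, MeasurableSet E → MeasurableSet E' →
      (∀ S : Set X, MeasurableSet S → (f ⁻¹' S = S) →
        (∀ x y : X, y ∈ partOf ℙ x → (y ∈ S ↔ x ∈ S)) → μ (E ∩ S) = μ (E' ∩ S)) →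
      μ {x | ν (partOf ℙ x) E < ν (partOf ℙ x) E'} = 0 := by
    intro E E' hE hE' hEE'
    have hGmeas : Measurable (fun x => ν (partOf ℙ x) E) := (hν3 E hE).1
    have hHmeas : Measurable (fun x => ν (partOf ℙ x) E') := (hν3 E' hE').1
    set S : Set X := {x | ν (partOf ℙ x) E < ν (partOf ℙ x) E'} with hSdef
    have hS : MeasurableSet S := measurableSet_lt hGmeas hHmeas
    have hfS : f ⁻¹' S = S := by
      ext y
      simp only [mem_preimage, hSdef, mem_setOf_eq, hℙ, partOf_dyn_f_apply f 𝒜₀ y]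
    have hsat : ∀ x y : X, y ∈ partOf ℙ x → (y ∈ S ↔ x ∈ S) := by
      intro x y hy
      simp only [hSdef, mem_setOf_eq, hℙ]
      rw [partOf_dyn_of_mem hy]
    have h1 : μ (E ∩ S) = ∫⁻ x, S.indicator (fun x => ν (partOf ℙ x) E) x ∂μ :=
      hkey S hS hsat E hE
    have h2 : μ (E' ∩ S) = ∫⁻ x, S.indicator (fun x => ν (partOf ℙ x) E') x ∂μ :=
      hkey S hS hsat E' hE'
    have h3 : μ (E ∩ S) = μ (E' ∩ S) := hEE' S hS hfS hsat
    have hle : S.indicator (fun x => ν (partOf ℙ x) E)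
        ≤ᵐ[μ] S.indicator (fun x => ν (partOf ℙ x) E') := by
      refine ae_of_all _ fun x => ?_
      by_cases hxS : x ∈ S
      · rw [Set.indicator_of_mem hxS, Set.indicator_of_mem hxS]
        exact le_of_lt hxS
      · rw [Set.indicator_of_notMem hxS, Set.indicator_of_notMem hxS]
    have hfin : ∫⁻ x, S.indicator (fun x => ν (partOf ℙ x) E) x ∂μ ≠ ⊤ := by
      refine ne_of_lt (lt_of_le_of_lt (lintegral_mono (g := fun _ => 1) fun x => ?_) ?_)
      · by_cases hxS : x ∈ S
        · rw [Set.indicator_of_mem hxS]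
          haveI := hprob x
          exact prob_le_one
        · rw [Set.indicator_of_notMem hxS]
          exact zero_le
      · rw [lintegral_one, measure_univ]
        exact ENNReal.one_lt_top
    have heqae : S.indicator (fun x => ν (partOf ℙ x) E)
        =ᵐ[μ] S.indicator (fun x => ν (partOf ℙ x) E') := by
      refine ae_eq_of_ae_le_of_lintegral_le hle hfin
        ((hHmeas.indicator hS).aemeasurable) ?_
      rw [← h1, ← h2, h3]
    have hae : ∀ᵐ x ∂μ, x ∉ S := by
      filter_upwards [heqae] with x hx
      intro hxS
      rw [Set.indicator_of_mem hxS, Set.indicator_of_mem hxS] at hx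
      exact absurd hx (ne_of_lt hxS)
    have : μ {x | ¬ x ∉ S} = 0 := hae
    simpa using this
  -- equality a.e. for a fixed measurable set A
  have hstep : ∀ A : Set X, MeasurableSet A →
      ∀ᵐ x ∂μ, ν (partOf ℙ x) (f ⁻¹' A) = ν (partOf ℙ x) A := by
    intro A hA
    have hcomm : ∀ S : Set X, MeasurableSet S → (f ⁻¹' S = S) →
        (∀ x y : X, y ∈ partOf ℙ x → (y ∈ S ↔ x ∈ S)) →
        μ (f ⁻¹' A ∩ S) = μ (A ∩ S) := by
      intro S hS hfS _
      rw [← hinv (A ∩ S) (hA.inter hS), preimage_inter, hfS]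
    have e1 := hnull (f ⁻¹' A) A (hf hA) hA (fun S hS hfS hsat => hcomm S hS hfS hsat)
    have e2 := hnull A (f ⁻¹' A) hA (hf hA) (fun S hS hfS hsat => (hcomm S hS hfS hsat).symm)
    rw [ae_iff]
    refine measure_mono_null (fun x hx => ?_) (measure_union_null e1 e2)
    rcases lt_or_gt_of_ne (hx : ν (partOf ℙ x) (f ⁻¹' A) ≠ ν (partOf ℙ x) A) with h | h
    · exact Or.inl h
    · exact Or.inr h
  -- combine over the countable algebra
  have hmeas𝒜 : ∀ A ∈ 𝒜₀, MeasurableSet A := fun A hA =>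
    hgen ▸ MeasurableSpace.measurableSet_generateFrom hA
  have hae𝒜 : ∀ᵐ x ∂μ, ∀ A ∈ 𝒜₀, ν (partOf ℙ x) (f ⁻¹' A) = ν (partOf ℙ x) A :=
    (ae_ball_iff hcount).2 fun A hA => hstep A (hmeas𝒜 A hA)
  filter_upwards [hae𝒜] with x hx
  intro A hA
  haveI := hprob x
  haveI : IsProbabilityMeasure ((ν (partOf ℙ x)).map f) :=
    Measure.isProbabilityMeasure_map hf.aemeasurable
  have hmapeq : (ν (partOf ℙ x)).map f = ν (partOf ℙ x) := by
    refine ext_of_generate_finite 𝒜₀ hgen.symm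
      (fun s hs t ht _ => halg.inter_mem hs ht) (fun s hs => ?_) (by simp)
    rw [Measure.map_apply hf (hmeas𝒜 s hs)]
    exact hx s hs
  rw [← Measure.map_apply hf hA, hmapeq]

end ErgodicDecomposition
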